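/- arXiv:1408.5326 — 3 statements merged into one kernel-verified Lean document; each statement's English description precedes it below -/
import Mathlib

section
/- Let c > 1, and for each sufficiently small γ > 0 let z*_{c,γ} denote the unique positive solution of ψ₁(z) = c·ψ₁(z + γ), and set ḡ_{c,γ} = c·ψ₂(z*_{c,γ} + γ) − ψ₂(z*_{c,γ}) (so that ḡ_{c,γ} = −H_{c,γ}'''(z*_{c,γ}) > 0). Then lim_{γ → 0+} γ³ · ḡ_{c,γ} = 2(√c − 1)⁴ / √c. -/
set_option maxHeartbeats 1000000

open Filter Finset Topology

/-- The digamma function `ψ(x) = (d/dx) log Γ(x)`. -/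
noncomputable def digamma (x : ℝ) : ℝ := deriv (fun y => Real.log (Real.Gamma y)) x

/-- The trigamma function `ψ₁ = ψ'`. -/
noncomputable def trigamma : ℝ → ℝ := deriv digamma

/-- The polygamma function `ψ₂ = ψ₁'`. -/
noncomputable def polygammaTwo : ℝ → ℝ := deriv trigamma


namespace GbarAux

lemma tendsto_inv_add (x : ℝ) : Tendsto (fun n : ℕ => 1/(x+(n:ℝ))) atTop (nhds 0) := by
  have h : Tendsto (fun n : ℕ => x + (n:ℝ)) atTop atTop :=
    tendsto_atTop_add_const_left _ x tendsto_natCast_atTop_atTop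
  refine h.inv_tendsto_atTop.congr fun n => ?_
  simp [one_div]

lemma hasSum_telescope (x : ℝ) (hx : 0 < x) :
    HasSum (fun n : ℕ => 1/(x+(n:ℝ)) - 1/(x+(n:ℝ)+1)) (1/x) := by
  have hnn : ∀ n : ℕ, 0 ≤ 1/(x+(n:ℝ)) - 1/(x+(n:ℝ)+1) := by
    intro n
    have h1 : (0:ℝ) < x + n := by positivity
    have := one_div_le_one_div_of_le h1 (by linarith : x+(n:ℝ) ≤ x+(n:ℝ)+1)
    linarith
  rw [hasSum_iff_tendsto_nat_of_nonneg hnn]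
  have hsum : ∀ n : ℕ, ∑ i ∈ range n, (1/(x+(i:ℝ)) - 1/(x+(i:ℝ)+1)) = 1/x - 1/(x+(n:ℝ)) := by
    intro n
    have := Finset.sum_range_sub' (fun i : ℕ => 1/(x+(i:ℝ))) n
    simp only [Nat.cast_zero, add_zero] at this
    rw [← this]
    refine Finset.sum_congr rfl fun i _ => ?_
    push_cast
    ring_nf
  simp only [hsum]
  have := (tendsto_const_nhds (x := 1/x) (f := atTop (α := ℕ))).sub (tendsto_inv_add x)
  simpa using this

lemma one_div_sq_le (x : ℝ) (hx : 0 < x) (n : ℕ) :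
    1/(x+(n:ℝ)+1)^2 ≤ 1/(x+(n:ℝ)) - 1/(x+(n:ℝ)+1) := by
  have h1 : (0:ℝ) < x + n := by positivity
  have h2 : (0:ℝ) < x + n + 1 := by positivity
  have key : 1/(x+(n:ℝ)) - 1/(x+(n:ℝ)+1) = 1/((x+n)*(x+n+1)) := by
    field_simp
    ring
  rw [key]
  apply one_div_le_one_div_of_le (by positivity)
  nlinarith

lemma summable_shift (x : ℝ) (hx : 0 < x) {p : ℕ} (hp : 2 ≤ p) :
    Summable (fun n : ℕ => 1/(x+(n:ℝ))^p) := by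
  rw [← summable_nat_add_iff 1]
  refine Summable.of_nonneg_of_le (fun n => by positivity) (fun n => ?_)
    (hasSum_telescope x hx).summable
  have h2 : (0:ℝ) < x + n + 1 := by positivity
  refine le_trans ?_ (one_div_sq_le x hx n)
  push_cast
  apply one_div_le_one_div_of_le (by positivity)
  have hcast : x+((n:ℝ)+1) = x+(n:ℝ)+1 := by ring
  rw [hcast]
  have h1 : (1:ℝ) ≤ x+(n:ℝ)+1 := by
    have := Nat.cast_nonneg (α := ℝ) n
    linarith
  exact pow_le_pow_right₀ h1 hp

noncomputable def T (x : ℝ) : ℝ := ∑' n : ℕ, 1/(x+(n:ℝ))^2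

noncomputable def Pf (x : ℝ) : ℝ := ∑' n : ℕ, 1/(x+(n:ℝ))^3

lemma summable_T (x : ℝ) (hx : 0 < x) : Summable (fun n : ℕ => 1/(x+(n:ℝ))^2) :=
  summable_shift x hx (le_refl 2)

lemma summable_Pf (x : ℝ) (hx : 0 < x) : Summable (fun n : ℕ => 1/(x+(n:ℝ))^3) :=
  summable_shift x hx (by norm_num)

lemma T_ge_inv_sq (x : ℝ) (hx : 0 < x) : 1/x^2 ≤ T x := by
  have := Summable.le_tsum (summable_T x hx) 0 (fun j _ => by positivity)
  rw [T]
  simpa using this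

lemma Pf_ge_inv_cube (x : ℝ) (hx : 0 < x) : 1/x^3 ≤ Pf x := by
  have := Summable.le_tsum (summable_Pf x hx) 0 (fun j _ => by positivity)
  rw [Pf]
  simpa using this

lemma T_ge_inv (x : ℝ) (hx : 0 < x) : 1/x ≤ T x := by
  have hterm : ∀ n : ℕ, 1/(x+(n:ℝ)) - 1/(x+(n:ℝ)+1) ≤ 1/(x+(n:ℝ))^2 := by
    intro n
    have h1 : (0:ℝ) < x + n := by positivity
    have key : 1/(x+(n:ℝ)) - 1/(x+(n:ℝ)+1) = 1/((x+n)*(x+n+1)) := by field_simp; ring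
    rw [key]
    apply one_div_le_one_div_of_le (by positivity)
    nlinarith
  have h := Summable.tsum_le_tsum hterm (hasSum_telescope x hx).summable (summable_T x hx)
  rwa [(hasSum_telescope x hx).tsum_eq] at h

lemma T_le (x : ℝ) (hx : 0 < x) : T x ≤ 1/x^2 + 1/x := by
  rw [T, Summable.tsum_eq_zero_add (summable_T x hx)]
  simp only [Nat.cast_zero, add_zero]
  gcongr
  have hterm : ∀ n : ℕ, 1/(x+((n:ℝ)+1))^2 ≤ 1/(x+(n:ℝ)) - 1/(x+(n:ℝ)+1) := by
    intro n
    calc 1/(x+((n:ℝ)+1))^2 = 1/(x+(n:ℝ)+1)^2 := by ring_nf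
      _ ≤ _ := one_div_sq_le x hx n
  have hsummable : Summable (fun n : ℕ => 1/(x+((n:ℝ)+1))^2) := by
    have := (summable_nat_add_iff (f := fun n : ℕ => 1/(x+(n:ℝ))^2) 1).2 (summable_T x hx)
    refine this.congr fun n => ?_
    push_cast
    ring_nf
  have h := Summable.tsum_le_tsum hterm hsummable (hasSum_telescope x hx).summable
  rw [(hasSum_telescope x hx).tsum_eq] at h
  refine le_trans (le_of_eq ?_) h
  apply tsum_congr; intro n; push_cast; ring_nf

lemma Pf_le (x : ℝ) (hx : 0 < x) : Pf x ≤ 1/x^3 + 2 := by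
  rw [Pf, Summable.tsum_eq_zero_add (summable_Pf x hx)]
  simp only [Nat.cast_zero, add_zero]
  gcongr
  have htel := (hasSum_telescope 1 one_pos).mul_left 2
  have hterm : ∀ n : ℕ, 1/(x+((n:ℝ)+1))^3 ≤ 2 * (1/(1+(n:ℝ)) - 1/(1+(n:ℝ)+1)) := by
    intro n
    have h1 : (0:ℝ) < 1 + n := by positivity
    have hn0 : (0:ℝ) ≤ n := n.cast_nonneg
    have key : 2 * (1/(1+(n:ℝ)) - 1/(1+(n:ℝ)+1)) = 2/((1+n)*(1+n+1)) := by
      field_simp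
      try ring
    rw [key, div_le_div_iff₀ (by positivity) (by positivity)]
    have hp3 : ((1:ℝ)+(n:ℝ))^3 ≤ (x+((n:ℝ)+1))^3 :=
      pow_le_pow_left₀ (by linarith) (by linarith) 3
    have hq : ((1:ℝ)+n)*(1+n+1) ≤ 2*(1+(n:ℝ))^3 := by
      nlinarith [mul_nonneg hn0 hn0, mul_nonneg (mul_nonneg hn0 hn0) hn0]
    linarith
  have hsummable : Summable (fun n : ℕ => 1/(x+((n:ℝ)+1))^3) := by
    have := (summable_nat_add_iff (f := fun n : ℕ => 1/(x+(n:ℝ))^3) 1).2 (summable_Pf x hx)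
    refine this.congr fun n => ?_
    push_cast
    ring_nf
  have h := Summable.tsum_le_tsum hterm hsummable htel.summable
  rw [htel.tsum_eq] at h
  simpa using h

lemma T_sub_le (z γ : ℝ) (hz : 0 < z) (hγ : 0 < γ) :
    T z - T (z+γ) ≤ 2*γ*(1/z^3+2) := by
  have hdiff : ∀ n : ℕ, 1/(z+(n:ℝ))^2 - 1/(z+γ+(n:ℝ))^2 ≤ 2*γ*(1/(z+(n:ℝ))^3) := by
    intro n
    have ha : (0:ℝ) < z + n := by positivity
    have hb : (0:ℝ) < z + γ + n := by positivity
    have key : 1/(z+(n:ℝ))^2 - 1/(z+γ+(n:ℝ))^2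
        = (γ*((z+n)+(z+γ+n)))/((z+n)^2*(z+γ+n)^2) := by field_simp; ring
    rw [key]
    rw [show 2*γ*(1/(z+(n:ℝ))^3) = (2*γ)/(z+(n:ℝ))^3 by ring]
    rw [div_le_div_iff₀ (by positivity) (by positivity)]
    nlinarith [mul_nonneg (mul_nonneg hγ.le (sq_nonneg (z+(n:ℝ))))
      (mul_nonneg (by linarith : (0:ℝ) ≤ (z+γ+(n:ℝ))-(z+(n:ℝ)))
        (by positivity : (0:ℝ) ≤ 2*(z+γ+(n:ℝ))+(z+(n:ℝ))))]
  have hsub : T z - T (z+γ) = ∑' n : ℕ, (1/(z+(n:ℝ))^2 - 1/(z+γ+(n:ℝ))^2) := by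
    rw [T, T, ← Summable.tsum_sub (summable_T z hz) (summable_T (z+γ) (by positivity))]
  rw [hsub]
  have h := Summable.tsum_le_tsum hdiff
    ((summable_T z hz).sub (summable_T (z+γ) (by positivity)))
    ((summable_Pf z hz).mul_left (2*γ))
  calc ∑' n : ℕ, (1/(z+(n:ℝ))^2 - 1/(z+γ+(n:ℝ))^2) ≤ ∑' n : ℕ, 2*γ*(1/(z+(n:ℝ))^3) := h
    _ = 2*γ* Pf z := by rw [tsum_mul_left]; rfl
    _ ≤ 2*γ*(1/z^3+2) := by
        have := Pf_le z hz
        nlinarith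



lemma tail_term_le (A y : ℝ) (hA : 0 < A) (hy : 0 < y) :
    1/(A+1) - 1/(y+A+1) ≤ y*(1/A - 1/(A+1)) := by
  have h1 : 1/(A+1) - 1/(y+A+1) = y/((A+1)*(y+A+1)) := by
    field_simp
    try ring
  have h2 : y*(1/A - 1/(A+1)) = y/(A*(A+1)) := by
    field_simp
    ring
  rw [h1, h2]
  apply div_le_div_of_nonneg_left hy.le (by positivity) ?_
  nlinarith

noncomputable def psiAux (x : ℝ) : ℝ :=
  -Real.eulerMascheroniConstant - 1/x + ∑' n : ℕ, (1/((n:ℝ)+1) - 1/(x+(n:ℝ)+1))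

lemma psi_term_nonneg (y : ℝ) (hy : 0 < y) (m : ℕ) :
    0 ≤ 1/((m:ℝ)+1) - 1/(y+(m:ℝ)+1) := by
  have h1 : (0:ℝ) < (m:ℝ)+1 := by positivity
  have := one_div_le_one_div_of_le h1 (by linarith : (m:ℝ)+1 ≤ y+(m:ℝ)+1)
  linarith

lemma psi_term_le (y : ℝ) (hy : 0 < y) (m : ℕ) :
    1/((m:ℝ)+1) - 1/(y+(m:ℝ)+1) ≤ y * (1/((m:ℝ)+1)^2) := by
  have h1 : (0:ℝ) < (m:ℝ)+1 := by positivity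
  have h2 : (0:ℝ) < y+(m:ℝ)+1 := by positivity
  have key : 1/((m:ℝ)+1) - 1/(y+(m:ℝ)+1) = y/(((m:ℝ)+1)*(y+(m:ℝ)+1)) := by
    field_simp
    ring
  rw [key, show y * (1/((m:ℝ)+1)^2) = y/(((m:ℝ)+1)^2) by ring]
  gcongr
  nlinarith

lemma summable_psi_terms (y : ℝ) (hy : 0 < y) :
    Summable (fun m : ℕ => 1/((m:ℝ)+1) - 1/(y+(m:ℝ)+1)) := by
  refine Summable.of_nonneg_of_le (psi_term_nonneg y hy) (psi_term_le y hy) ?_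
  have : Summable (fun m : ℕ => 1/(1+(m:ℝ))^2) := summable_T 1 one_pos
  refine (this.mul_left y).congr fun m => ?_
  ring_nf

lemma logGamma_hasDerivAt (x : ℝ) (hx : 0 < x) :
    HasDerivAt (fun y => Real.log (Real.Gamma y)) (psiAux x) x := by
  set s : Set ℝ := Set.Ioo (x/2) (x+1) with hs
  have hxs : x ∈ s := ⟨by linarith, by linarith⟩
  set f : ℕ → ℝ → ℝ := fun n y =>
    (y * Real.log n + Real.log (Nat.factorial n : ℝ)) - ∑ j ∈ Finset.range (n+1), Real.log (y + (j:ℝ))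
    with hf_def
  set f' : ℕ → ℝ → ℝ := fun n y =>
    Real.log n - ∑ j ∈ Finset.range (n+1), 1/(y + (j:ℝ)) with hf'_def
  have hyspos : ∀ y ∈ s, 0 < y := fun y hy => lt_trans (by positivity) hy.1
  -- each f n is differentiable with derivative f' n
  have hf : ∀ᶠ n : ℕ in atTop, ∀ y ∈ s, HasDerivAt (f n) (f' n y) y := by
    refine Eventually.of_forall fun n y hy => ?_
    have hy0 : 0 < y := hyspos y hy
    have h1 : HasDerivAt (fun y : ℝ => y * Real.log n + Real.log (Nat.factorial n : ℝ))
        (Real.log n) y := (hasDerivAt_mul_const _).add_const _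
    have h3 : HasDerivAt (fun y : ℝ => ∑ j ∈ Finset.range (n+1), Real.log (y + (j:ℝ)))
        (∑ j ∈ Finset.range (n+1), 1/(y + (j:ℝ))) y := by
      refine HasDerivAt.fun_sum fun j _ => ?_
      have hpos : (0:ℝ) < y + j := by positivity
      have := ((hasDerivAt_id y).add_const (j:ℝ)).log hpos.ne'
      simpa [one_div] using this
    exact h1.sub h3
  -- pointwise convergence to log ∘ Gamma
  have hfg : ∀ y ∈ s, Tendsto (fun n => f n y) atTop (𝓝 (Real.log (Real.Gamma y))) := by
    intro y hy
    have hy0 : 0 < y := hyspos y hy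
    have hΓ : 0 < Real.Gamma y := Real.Gamma_pos_of_pos hy0
    have h := (Real.GammaSeq_tendsto_Gamma y).log hΓ.ne'
    refine Tendsto.congr' ?_ h
    filter_upwards [eventually_ge_atTop 1] with n hn
    have hn0 : (0:ℝ) < (n:ℝ) := by exact_mod_cast hn
    have hprod : (0:ℝ) < ∏ j ∈ Finset.range (n+1), (y + (j:ℝ)) :=
      Finset.prod_pos fun j _ => by positivity
    have hfact : (0:ℝ) < (Nat.factorial n : ℝ) := by exact_mod_cast n.factorial_pos
    have hrpow : (0:ℝ) < (n:ℝ) ^ y := Real.rpow_pos_of_pos hn0 y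
    rw [Real.GammaSeq, Real.log_div (by positivity) hprod.ne',
      Real.log_mul hrpow.ne' hfact.ne', Real.log_rpow hn0,
      Real.log_prod (s := Finset.range (n+1)) (f := fun j : ℕ => y + (j:ℝ))
        (fun j _ => (by positivity : (0:ℝ) < y + (j:ℝ)).ne')]
  -- uniform convergence of the derivatives
  have hf' : TendstoUniformlyOn f' psiAux atTop s := by
    rw [Metric.tendstoUniformlyOn_iff]
    intro ε hε
    have hloglim : Tendsto (fun n : ℕ => |((harmonic n : ℝ)) - Real.log n -
        Real.eulerMascheroniConstant|) atTop (𝓝 0) := by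
      have := Real.tendsto_harmonic_sub_log.sub_const Real.eulerMascheroniConstant
      rw [show (0:ℝ) = |Real.eulerMascheroniConstant - Real.eulerMascheroniConstant| by simp]
      exact (this.abs).congr fun n => by rw [sub_sub]
    have h1 := (Metric.tendsto_atTop.mp hloglim) (ε/2) (by positivity)
    have h2 := Metric.tendsto_atTop.mp (tendsto_const_div_atTop_nhds_zero_nat (x+1)) (ε/2)
      (by positivity)
    obtain ⟨N1, hN1⟩ := h1
    obtain ⟨N2, hN2⟩ := h2
    filter_upwards [eventually_ge_atTop N1, eventually_ge_atTop N2, eventually_ge_atTop 1]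
      with n hn1 hn2 hn3 y hy
    have hy0 : 0 < y := hyspos y hy
    have hn0 : (0:ℝ) < (n:ℝ) := by exact_mod_cast hn3
    have hsummable := summable_psi_terms y hy0
    set tail : ℝ := ∑' k : ℕ, (1/(((k+n:ℕ):ℝ)+1) - 1/(y+((k+n:ℕ):ℝ)+1)) with htail_def
    -- key identity
    have hkey : psiAux y - f' n y =
        (((harmonic n : ℝ)) - Real.log n - Real.eulerMascheroniConstant) + tail := by
      have hsplit : ∑ j ∈ Finset.range (n+1), 1/(y + (j:ℝ))
          = (∑ k ∈ Finset.range n, 1/(y+(k:ℝ)+1)) + 1/y := by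
        rw [Finset.sum_range_succ' (fun j => 1/(y + (j:ℝ))) n]
        push_cast
        simp [add_assoc]
      have hS := Summable.sum_add_tsum_nat_add (f := fun m : ℕ => 1/((m:ℝ)+1) - 1/(y+(m:ℝ)+1)) n
        hsummable
      have hharm : ((harmonic n : ℝ)) = ∑ k ∈ Finset.range n, 1/((k:ℝ)+1) := by
        rw [harmonic]
        push_cast
        simp [one_div]
      have hsum_sub : ∑ k ∈ Finset.range n, (1/((k:ℝ)+1) - 1/(y+(k:ℝ)+1))
          = (∑ k ∈ Finset.range n, 1/((k:ℝ)+1)) - ∑ k ∈ Finset.range n, 1/(y+(k:ℝ)+1) :=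
        Finset.sum_sub_distrib _ _
      simp only [psiAux, hf'_def]
      rw [← hS, hsplit, hsum_sub, hharm, htail_def]
      push_cast
      ring
    have htail_nonneg : 0 ≤ tail := by
      rw [htail_def]
      exact tsum_nonneg fun k => psi_term_nonneg y hy0 (k+n)
    have htail_le : tail ≤ y * (1/(n:ℝ)) := by
      have htel := (hasSum_telescope (n:ℝ) hn0).mul_left y
      have hsum2 : Summable (fun k : ℕ => 1/(((k+n:ℕ):ℝ)+1) - 1/(y+((k+n:ℕ):ℝ)+1)) :=
        (summable_nat_add_iff n).2 hsummable
      have hterm : ∀ k : ℕ, 1/(((k+n:ℕ):ℝ)+1) - 1/(y+((k+n:ℕ):ℝ)+1)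
          ≤ y * (1/((n:ℝ)+(k:ℝ)) - 1/((n:ℝ)+(k:ℝ)+1)) := by
        intro k
        have hc : ((k+n:ℕ):ℝ) = (n:ℝ)+(k:ℝ) := by push_cast; ring
        rw [hc]
        exact tail_term_le ((n:ℝ)+(k:ℝ)) y (by positivity) hy0
      calc tail ≤ ∑' k : ℕ, y * (1/((n:ℝ)+(k:ℝ)) - 1/((n:ℝ)+(k:ℝ)+1)) :=
            Summable.tsum_le_tsum hterm hsum2 htel.summable
        _ = y * (1/(n:ℝ)) := htel.tsum_eq
    rw [Real.dist_eq, hkey]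
    have h1' := hN1 n hn1
    rw [Real.dist_eq, sub_zero, abs_abs] at h1'
    have h2' := hN2 n hn2
    rw [Real.dist_eq, sub_zero] at h2'
    have hyb : y ≤ x + 1 := le_of_lt hy.2
    have : |(((harmonic n : ℝ)) - Real.log n - Real.eulerMascheroniConstant) + tail|
        ≤ |((harmonic n : ℝ)) - Real.log n - Real.eulerMascheroniConstant| + tail := by
      calc _ ≤ |((harmonic n : ℝ)) - Real.log n - Real.eulerMascheroniConstant| + |tail| :=
            abs_add_le _ _
        _ = _ := by rw [abs_of_nonneg htail_nonneg]
      ;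
    have htail2 : tail ≤ (x+1)/(n:ℝ) := by
      refine le_trans htail_le ?_
      have h1n : (0:ℝ) ≤ 1/(n:ℝ) := by positivity
      calc y * (1/(n:ℝ)) ≤ (x+1) * (1/(n:ℝ)) := mul_le_mul_of_nonneg_right (by linarith) h1n
        _ = (x+1)/(n:ℝ) := by ring
    have hfin : (x+1)/(n:ℝ) < ε/2 := lt_of_abs_lt h2'
    calc |(((harmonic n : ℝ)) - Real.log n - Real.eulerMascheroniConstant) + tail|
        ≤ |((harmonic n : ℝ)) - Real.log n - Real.eulerMascheroniConstant| + tail := this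
      _ < ε/2 + ε/2 := by refine add_lt_add (lt_of_le_of_lt (le_refl _) h1') (lt_of_le_of_lt htail2 hfin)
      _ = ε := by ring
  exact hasDerivAt_of_tendstoUniformlyOn isOpen_Ioo hf' hf hfg hxs

lemma digamma_eq (x : ℝ) (hx : 0 < x) : digamma x = psiAux x :=
  (logGamma_hasDerivAt x hx).deriv

lemma summable_shifted_sq (a : ℝ) (ha : 0 < a) :
    Summable (fun n : ℕ => 1/(a+(n:ℝ)+1)^2) := by
  have := (summable_nat_add_iff (f := fun n : ℕ => 1/(a+(n:ℝ))^2) 1).2 (summable_T a ha)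
  refine this.congr fun n => ?_
  push_cast
  ring_nf

lemma aux_deriv1 (n : ℕ) (y : ℝ) (hy0 : 0 < y) :
    HasDerivAt (fun y : ℝ => 1/((n:ℝ)+1) - 1/(y+(n:ℝ)+1)) (1/(y+(n:ℝ)+1)^2) y := by
  have hpos : (0:ℝ) < y + (n:ℝ) + 1 := by positivity
  have h := (((hasDerivAt_id y).add_const ((n:ℝ)+1)).inv
    (by simp only [id_eq]; positivity)).const_sub (1/((n:ℝ)+1))
  have h2 := h.congr_of_eventuallyEq
    (f₁ := fun z : ℝ => 1/((n:ℝ)+1) - 1/(z+(n:ℝ)+1))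
    (by filter_upwards with z; simp only [id_eq, one_div, Pi.inv_apply]; ring_nf)
  refine h2.congr_deriv ?_
  simp only [id_eq]
  ring

lemma aux_deriv2 (n : ℕ) (y : ℝ) (hy0 : 0 < y) :
    HasDerivAt (fun y : ℝ => 1/(y+(n:ℝ))^2) (-2/(y+(n:ℝ))^3) y := by
  have hpos : (0:ℝ) < y + (n:ℝ) := by positivity
  have h := (((hasDerivAt_id y).add_const ((n:ℝ))).pow 2).inv
    (by simp only [id_eq, Pi.pow_apply]; positivity)
  have h2 := h.congr_of_eventuallyEq
    (f₁ := fun z : ℝ => 1/(z+(n:ℝ))^2)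
    (by filter_upwards with z; simp only [id_eq, one_div, Pi.inv_apply, Pi.pow_apply])
  refine h2.congr_deriv ?_
  simp only [id_eq, Pi.pow_apply]
  have h3 : (0:ℝ) < (y + (n:ℝ))^3 := by positivity
  field_simp
  ring

lemma psiAux_hasDerivAt (x : ℝ) (hx : 0 < x) : HasDerivAt psiAux (T x) x := by
  have hhalf : 0 < x/2 := by positivity
  -- derivative of the tsum part
  have hS : HasDerivAt (fun y : ℝ => ∑' n : ℕ, (1/((n:ℝ)+1) - 1/(y+(n:ℝ)+1)))
      (∑' n : ℕ, 1/(x+(n:ℝ)+1)^2) x := by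
    refine hasDerivAt_tsum_of_isPreconnected (u := fun n : ℕ => 1/((x/2)+(n:ℝ)+1)^2)
      (summable_shifted_sq (x/2) hhalf) isOpen_Ioi (isPreconnected_Ioi)
      (g' := fun n y => 1/(y+(n:ℝ)+1)^2)
      (fun n y hy => ?_) (fun n y hy => ?_)
      (Set.mem_Ioi.mpr (half_lt_self hx)) (summable_psi_terms x hx)
      (Set.mem_Ioi.mpr (half_lt_self hx))
    case refine_1 =>
      exact aux_deriv1 n y (lt_trans hhalf hy)
    case refine_2 =>
      have hy0 : (x/2) < y := hy
      have hcn := Nat.cast_nonneg (α := ℝ) n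
      have hpos : (0:ℝ) < y + (n:ℝ) + 1 := by linarith
      show ‖1/(y+(n:ℝ)+1)^2‖ ≤ 1/((x/2)+(n:ℝ)+1)^2
      rw [Real.norm_eq_abs, abs_of_nonneg (by positivity)]
      gcongr
      all_goals first | positivity | linarith
  -- derivative of the elementary part
  have h1 : HasDerivAt (fun y : ℝ => -Real.eulerMascheroniConstant - 1/y) (1/x^2) x := by
    have := (hasDerivAt_inv hx.ne').const_sub (-Real.eulerMascheroniConstant)
    have harr : -(-(x^2)⁻¹) = 1/x^2 := by
      rw [one_div]
      ring
    rw [harr] at this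
    refine this.congr_of_eventuallyEq ?_
    filter_upwards with z
    rw [one_div]
  have htotal := h1.add hS
  have hval : 1/x^2 + ∑' n : ℕ, 1/(x+(n:ℝ)+1)^2 = T x := by
    rw [T, Summable.tsum_eq_zero_add (summable_T x hx)]
    push_cast
    congr 1
    · norm_num
    · apply tsum_congr
      intro n
      push_cast
      ring_nf
  rw [hval] at htotal
  exact htotal.congr_of_eventuallyEq (by filter_upwards with z; rw [psiAux]; rfl)

lemma trigamma_eq (x : ℝ) (hx : 0 < x) : trigamma x = T x := by
  have hev : digamma =ᶠ[nhds x] psiAux := by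
    filter_upwards [Ioi_mem_nhds hx] with y hy
    exact digamma_eq y hy
  show deriv digamma x = T x
  rw [hev.deriv_eq]
  exact (psiAux_hasDerivAt x hx).deriv

lemma T_hasDerivAt (x : ℝ) (hx : 0 < x) : HasDerivAt T (-2 * Pf x) x := by
  have hhalf : 0 < x/2 := by positivity
  have hD : HasDerivAt (fun y : ℝ => ∑' n : ℕ, 1/(y+(n:ℝ))^2)
      (∑' n : ℕ, -2/(x+(n:ℝ))^3) x := by
    refine hasDerivAt_tsum_of_isPreconnected (u := fun n : ℕ => 2/((x/2)+(n:ℝ))^3)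
      ((summable_Pf (x/2) hhalf).mul_left 2 |>.congr (fun n => by rw [mul_one_div]))
      isOpen_Ioi (isPreconnected_Ioi)
      (g' := fun n y => -2/(y+(n:ℝ))^3)
      (fun n y hy => ?_) (fun n y hy => ?_)
      (Set.mem_Ioi.mpr (half_lt_self hx)) (summable_T x hx)
      (Set.mem_Ioi.mpr (half_lt_self hx))
    case refine_1 =>
      exact aux_deriv2 n y (lt_trans hhalf hy)
    case refine_2 =>
      have hy0 : (x/2) < y := hy
      have hcn := Nat.cast_nonneg (α := ℝ) n
      have hpos : (0:ℝ) < y + (n:ℝ) := by linarith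
      show ‖-2/(y+(n:ℝ))^3‖ ≤ 2/((x/2)+(n:ℝ))^3
      rw [Real.norm_eq_abs, show (-2 : ℝ)/(y+(n:ℝ))^3 = -(2/(y+(n:ℝ))^3) by ring,
        abs_neg, abs_of_nonneg (by positivity)]
      gcongr
      all_goals first | positivity | linarith
  have hval : ∑' n : ℕ, -2/(x+(n:ℝ))^3 = -2 * Pf x := by
    rw [Pf, ← tsum_mul_left]
    apply tsum_congr
    intro n
    rw [mul_one_div]
  rw [hval] at hD
  exact hD.congr_of_eventuallyEq (by filter_upwards with z; rw [T])

lemma polygammaTwo_eq (x : ℝ) (hx : 0 < x) : polygammaTwo x = -2 * Pf x := by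
  have hev : trigamma =ᶠ[nhds x] T := by
    filter_upwards [Ioi_mem_nhds hx] with y hy
    exact trigamma_eq y hy
  show deriv trigamma x = -2 * Pf x
  rw [hev.deriv_eq]
  exact (T_hasDerivAt x hx).deriv

lemma key_ineqs (c : ℝ) (hc : 1 < c) (z γ : ℝ) (hz : 0 < z) (hγ : 0 < γ) (hγ1 : γ ≤ 1)
    (heq : T z = c * T (z+γ)) :
    z ≤ 1/(Real.sqrt c - 1) ∧ c*z^2 ≤ (1+z)*(z+γ)^2 ∧ (z+γ)^2 ≤ c*(1+(z+γ))*z^2 ∧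
      (c-1)/(z+γ) ≤ 2*γ*(1/z^3+2) := by
  have hc0 : (0:ℝ) < c := by linarith
  have hzγ : 0 < z + γ := by linarith
  have hTz_le := T_le z hz
  have hTz_ge := T_ge_inv_sq z hz
  have hTzγ_ge := T_ge_inv (z+γ) hzγ
  have hTzγ_ge2 := T_ge_inv_sq (z+γ) hzγ
  have hTzγ_le := T_le (z+γ) hzγ
  have hs1 : 1 < Real.sqrt c := by
    rw [show (1:ℝ) = Real.sqrt 1 by simp]
    exact Real.sqrt_lt_sqrt (by norm_num) hc
  -- inequality (2)
  have h2 : c*z^2 ≤ (1+z)*(z+γ)^2 := by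
    have e1 : c * (1/(z+γ)^2) ≤ 1/z^2 + 1/z := by
      calc c * (1/(z+γ)^2) ≤ c * T (z+γ) :=
            mul_le_mul_of_nonneg_left hTzγ_ge2 hc0.le
        _ = T z := heq.symm
        _ ≤ 1/z^2 + 1/z := hTz_le
    have e2 := mul_le_mul_of_nonneg_right e1 (by positivity : (0:ℝ) ≤ z^2*(z+γ)^2)
    have id1 : c * (1/(z+γ)^2) * (z^2*(z+γ)^2) = c*z^2 := by field_simp
    have id2 : (1/z^2 + 1/z) * (z^2*(z+γ)^2) = (1+z)*(z+γ)^2 := by field_simp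
    rw [id1, id2] at e2
    exact e2
  -- inequality (1)
  have h1 : z ≤ 1/(Real.sqrt c - 1) := by
    have e1 : c * (1/(z+γ)) ≤ 1/z^2 + 1/z := by
      calc c * (1/(z+γ)) ≤ c * T (z+γ) := mul_le_mul_of_nonneg_left hTzγ_ge hc0.le
        _ = T z := heq.symm
        _ ≤ 1/z^2 + 1/z := hTz_le
    have e2 := mul_le_mul_of_nonneg_right e1 (by positivity : (0:ℝ) ≤ z^2*(z+γ))
    have id1 : c * (1/(z+γ)) * (z^2*(z+γ)) = c*z^2 := by field_simp
    have id2 : (1/z^2 + 1/z) * (z^2*(z+γ)) = (1+z)*(z+γ) := by field_simp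
    rw [id1, id2] at e2
    have e3 : c*z^2 ≤ (1+z)^2 := by
      nlinarith [mul_le_mul_of_nonneg_left (by linarith : z+γ ≤ z+1)
        (by linarith : (0:ℝ) ≤ 1+z)]
    have e4 := Real.sqrt_le_sqrt e3
    rw [Real.sqrt_mul hc0.le, Real.sqrt_sq hz.le, Real.sqrt_sq (by linarith : (0:ℝ) ≤ 1+z)] at e4
    rw [le_div_iff₀ (by linarith : (0:ℝ) < Real.sqrt c - 1)]
    nlinarith
  -- inequality (3)
  have h3 : (z+γ)^2 ≤ c*(1+(z+γ))*z^2 := by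
    have e1 : 1/z^2 ≤ c * (1/(z+γ)^2 + 1/(z+γ)) := by
      calc 1/z^2 ≤ T z := hTz_ge
        _ = c * T (z+γ) := heq
        _ ≤ c * (1/(z+γ)^2 + 1/(z+γ)) := mul_le_mul_of_nonneg_left hTzγ_le hc0.le
    have e2 := mul_le_mul_of_nonneg_right e1 (by positivity : (0:ℝ) ≤ z^2*(z+γ)^2)
    have id1 : 1/z^2 * (z^2*(z+γ)^2) = (z+γ)^2 := by field_simp
    have id2 : c * (1/(z+γ)^2 + 1/(z+γ)) * (z^2*(z+γ)^2) = c*(1+(z+γ))*z^2 := by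
      field_simp
    rw [id1, id2] at e2
    exact e2
  -- inequality (4)
  have h4 : (c-1)/(z+γ) ≤ 2*γ*(1/z^3+2) := by
    have e1 : (c-1) * T (z+γ) = T z - T (z+γ) := by
      rw [heq]; ring
    have e2 : (c-1) * (1/(z+γ)) ≤ (c-1) * T (z+γ) :=
      mul_le_mul_of_nonneg_left hTzγ_ge (by linarith)
    have e3 := T_sub_le z γ hz hγ
    calc (c-1)/(z+γ) = (c-1) * (1/(z+γ)) := by ring
      _ ≤ (c-1) * T (z+γ) := e2
      _ = T z - T (z+γ) := e1
      _ ≤ 2*γ*(1/z^3+2) := e3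
  exact ⟨h1, h2, h3, h4⟩

end GbarAux

open GbarAux

/-- If, for each sufficiently small `γ > 0`, `zstar γ` is a (the unique) positive solution of
`ψ₁(z) = c·ψ₁(z + γ)`, and `ḡ_{c,γ} = c·ψ₂(zstar γ + γ) - ψ₂(zstar γ)`, then
`γ³·ḡ_{c,γ} → 2(√c - 1)⁴/√c` as `γ → 0+`. -/
theorem gbar_asymptotics (c : ℝ) (hc : 1 < c)
    (γ₀ : ℝ) (hγ₀ : 0 < γ₀) (zstar : ℝ → ℝ)
    (hz : ∀ γ : ℝ, 0 < γ → γ < γ₀ →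
      0 < zstar γ ∧ trigamma (zstar γ) = c * trigamma (zstar γ + γ)) :
    Tendsto
      (fun γ : ℝ => γ ^ 3 * (c * polygammaTwo (zstar γ + γ) - polygammaTwo (zstar γ)))
      (nhdsWithin 0 (Set.Ioi 0))
      (nhds (2 * (Real.sqrt c - 1) ^ 4 / Real.sqrt c)) := by
  have hc0 : (0:ℝ) < c := by linarith
  set s : ℝ := Real.sqrt c with hs_def
  have hs1 : 1 < s := by
    rw [hs_def, show (1:ℝ) = Real.sqrt 1 by simp]
    exact Real.sqrt_lt_sqrt (by norm_num) hc
  have hs0 : 0 < s := by linarith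
  have hcs : s^2 = c := Real.sq_sqrt hc0.le
  set l : Filter ℝ := nhdsWithin 0 (Set.Ioi 0) with hl_def
  set B : ℝ := 1/(s-1) with hB_def
  have hB0 : 0 < B := by rw [hB_def]; apply div_pos one_pos; linarith
  -- basic eventual facts
  have hbase : ∀ᶠ γ in l, 0 < γ ∧ γ < γ₀ ∧ γ ≤ 1 ∧ 0 < zstar γ ∧
      T (zstar γ) = c * T (zstar γ + γ) := by
    have hmem : Set.Ioo (0:ℝ) (min γ₀ 1) ∈ l := by
      rw [hl_def]
      exact Ioo_mem_nhdsGT (lt_min hγ₀ one_pos)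
    filter_upwards [hmem] with γ hγ
    obtain ⟨hγ0, hγm⟩ := hγ
    have hγγ₀ : γ < γ₀ := lt_of_lt_of_le hγm (min_le_left _ _)
    have hγ1 : γ ≤ 1 := le_of_lt (lt_of_lt_of_le hγm (min_le_right _ _))
    obtain ⟨hz0, heqtri⟩ := hz γ hγ0 hγγ₀
    refine ⟨hγ0, hγγ₀, hγ1, hz0, ?_⟩
    rw [← trigamma_eq _ hz0, ← trigamma_eq _ (by linarith)]
    exact heqtri
  have hkey : ∀ᶠ γ in l, zstar γ ≤ B ∧ c*(zstar γ)^2 ≤ (1+zstar γ)*(zstar γ+γ)^2 ∧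
      (zstar γ+γ)^2 ≤ c*(1+(zstar γ+γ))*(zstar γ)^2 ∧
      (c-1)/(zstar γ+γ) ≤ 2*γ*(1/(zstar γ)^3+2) := by
    filter_upwards [hbase] with γ ⟨hγ0, _, hγ1, hz0, heq⟩
    exact key_ineqs c hc _ γ hz0 hγ0 hγ1 heq
  -- Step B : zstar tends to 0
  have hzlim : Tendsto zstar l (nhds 0) := by
    rw [hl_def, Metric.tendsto_nhdsWithin_nhds]
    intro ε hε
    have hd2 : (0:ℝ) < (c-1)/((B+1)*(2*(1/ε^3+2))) := by
      apply div_pos (by linarith)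
      have : (0:ℝ) < 1/ε^3 + 2 := by positivity
      nlinarith
    refine ⟨min (min γ₀ 1) ((c-1)/((B+1)*(2*(1/ε^3+2)))), lt_min (lt_min hγ₀ one_pos) hd2, ?_⟩
    intro γ hγIoi hγd
    rw [Real.dist_eq, sub_zero] at hγd ⊢
    have hγ0 : 0 < γ := hγIoi
    have hγd' : γ < min (min γ₀ 1) ((c-1)/((B+1)*(2*(1/ε^3+2)))) := by
      rwa [abs_of_pos hγ0] at hγd
    have hγγ₀ : γ < γ₀ := lt_of_lt_of_le hγd' (le_trans (min_le_left _ _) (min_le_left _ _))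
    have hγ1 : γ ≤ 1 := le_of_lt (lt_of_lt_of_le hγd'
      (le_trans (min_le_left _ _) (min_le_right _ _)))
    have hγsmall : γ < (c-1)/((B+1)*(2*(1/ε^3+2))) := lt_of_lt_of_le hγd' (min_le_right _ _)
    obtain ⟨hz0, heqtri⟩ := hz γ hγ0 hγγ₀
    have heq : T (zstar γ) = c * T (zstar γ + γ) := by
      rw [← trigamma_eq _ hz0, ← trigamma_eq _ (by linarith)]
      exact heqtri
    obtain ⟨hB, -, -, h4⟩ := key_ineqs c hc _ γ hz0 hγ0 hγ1 heq
    set z := zstar γ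
    rw [abs_of_pos hz0]
    by_contra hcon
    push_neg at hcon
    have hεz : ε ≤ z := hcon
    have hεz3 : 1/z^3 ≤ 1/ε^3 := by
      apply one_div_le_one_div_of_le (by positivity)
      exact pow_le_pow_left₀ hε.le hεz 3
    have hzγB : z + γ ≤ B + 1 := by linarith
    have hlow : (c-1)/(B+1) ≤ (c-1)/(z+γ) := by
      exact div_le_div_of_nonneg_left (by linarith) (by linarith) hzγB
    have hup2 : 2*γ*(1/z^3+2) ≤ 2*γ*(1/ε^3+2) := by
      apply mul_le_mul_of_nonneg_left (by linarith) (by linarith)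
    have hfin : (c-1)/(B+1) ≤ 2*γ*(1/ε^3+2) := le_trans hlow (le_trans h4 hup2)
    have hcontr : 2*γ*(1/ε^3+2) < (c-1)/(B+1) := by
      rw [lt_div_iff₀ (by linarith : (0:ℝ) < B+1)]
      rw [lt_div_iff₀ (by positivity : (0:ℝ) < (B+1)*(2*(1/ε^3+2)))] at hγsmall
      nlinarith [hγsmall]
    linarith
  -- Step C : the ratio γ / zstar γ tends to s - 1
  have hzpos : ∀ᶠ γ in l, 0 < zstar γ := by
    filter_upwards [hbase] with γ hγ; exact hγ.2.2.2.1
  have hγpos : ∀ᶠ γ in l, 0 < γ := by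
    filter_upwards [hbase] with γ hγ; exact hγ.1
  have hγid : Tendsto (fun γ : ℝ => γ) l (nhds 0) := by
    rw [hl_def]
    exact tendsto_id.mono_left nhdsWithin_le_nhds
  have h1z : Tendsto (fun γ => 1 + zstar γ) l (nhds 1) := by
    have := tendsto_const_nhds (x := (1:ℝ)) (f := l) |>.add hzlim
    simpa using this
  have hsq1 : Tendsto (fun γ => Real.sqrt (1 + zstar γ)) l (nhds 1) := by
    have := (Real.continuous_sqrt.tendsto 1).comp h1z
    rw [Real.sqrt_one] at this
    exact this
  have h1zγ : Tendsto (fun γ => 1 + (zstar γ + γ)) l (nhds 1) := by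
    have := tendsto_const_nhds (x := (1:ℝ)) (f := l) |>.add (hzlim.add hγid)
    simpa using this
  have hsq2 : Tendsto (fun γ => Real.sqrt (1 + (zstar γ + γ))) l (nhds 1) := by
    have := (Real.continuous_sqrt.tendsto 1).comp h1zγ
    rw [Real.sqrt_one] at this
    exact this
  have hlo : Tendsto (fun γ => s / Real.sqrt (1 + zstar γ) - 1) l (nhds (s - 1)) := by
    have := (tendsto_const_nhds (x := s) (f := l)).div hsq1 one_ne_zero |>.sub
      (tendsto_const_nhds (x := (1:ℝ)))
    simpa using this
  have hup : Tendsto (fun γ => s * Real.sqrt (1 + (zstar γ + γ)) - 1) l (nhds (s - 1)) := by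
    have := ((tendsto_const_nhds (x := s) (f := l)).mul hsq2).sub
      (tendsto_const_nhds (x := (1:ℝ)))
    simpa using this
  have hrat : Tendsto (fun γ => γ / zstar γ) l (nhds (s - 1)) := by
    refine tendsto_of_tendsto_of_tendsto_of_le_of_le' hlo hup ?_ ?_
    · -- lower bound
      filter_upwards [hbase, hkey] with γ hb hk
      obtain ⟨hγ0, -, -, hz0, -⟩ := hb
      obtain ⟨-, h2, -, -⟩ := hk
      set z := zstar γ
      have hzγ : 0 < z + γ := by linarith
      have hw : 0 < Real.sqrt (1 + z) := Real.sqrt_pos.mpr (by linarith)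
      have e4 := Real.sqrt_le_sqrt h2
      rw [Real.sqrt_mul hc0.le, Real.sqrt_sq hz0.le,
        Real.sqrt_mul (by linarith : (0:ℝ) ≤ 1+z), Real.sqrt_sq hzγ.le] at e4
      -- e4 : s * z ≤ sqrt (1+z) * (z+γ)
      have e5 : s / Real.sqrt (1+z) ≤ 1 + γ/z := by
        rw [div_le_iff₀ hw]
        have id1 : (1 + γ/z) * Real.sqrt (1+z) * z = Real.sqrt (1+z) * (z+γ) := by
          field_simp
        have := mul_le_mul_of_nonneg_right e4 (le_of_lt (by positivity : (0:ℝ) < 1/z))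
        calc s = s * z * (1/z) := by field_simp
          _ ≤ Real.sqrt (1+z) * (z+γ) * (1/z) := this
          _ = (1 + γ/z) * Real.sqrt (1+z) := by field_simp; try ring
      linarith
    · -- upper bound
      filter_upwards [hbase, hkey] with γ hb hk
      obtain ⟨hγ0, -, -, hz0, -⟩ := hb
      obtain ⟨-, -, h3, -⟩ := hk
      set z := zstar γ
      have hzγ : 0 < z + γ := by linarith
      have e4 := Real.sqrt_le_sqrt h3
      rw [Real.sqrt_sq hzγ.le, Real.sqrt_mul (by positivity : (0:ℝ) ≤ c*(1+(z+γ))),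
        Real.sqrt_sq hz0.le, Real.sqrt_mul hc0.le] at e4
      -- e4 : z + γ ≤ s * sqrt (1+(z+γ)) * z
      have e5 : 1 + γ/z ≤ s * Real.sqrt (1+(z+γ)) := by
        have := mul_le_mul_of_nonneg_right e4 (le_of_lt (by positivity : (0:ℝ) < 1/z))
        calc 1 + γ/z = (z+γ) * (1/z) := by field_simp; try ring
          _ ≤ s * Real.sqrt (1+(z+γ)) * z * (1/z) := this
          _ = s * Real.sqrt (1+(z+γ)) := by field_simp
      linarith
  -- ratio with z+γ in denominator
  have hden : Tendsto (fun γ => 1 + γ / zstar γ) l (nhds s) := by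
    have := tendsto_const_nhds (x := (1:ℝ)) (f := l) |>.add hrat
    have h : 1 + (s - 1) = s := by ring
    rwa [h] at this
  have hu : Tendsto (fun γ => γ / (zstar γ + γ)) l (nhds ((s-1)/s)) := by
    have hq := hrat.div hden (by linarith : s ≠ 0)
    refine Tendsto.congr' ?_ hq
    filter_upwards [hbase] with γ hb
    obtain ⟨hγ0, -, -, hz0, -⟩ := hb
    set z := zstar γ
    have hzγ : 0 < z + γ := by linarith
    have h1 : 1 + γ/z = (z+γ)/z := by field_simp; try ring
    simp only [Pi.div_apply]
    rw [h1]
    rw [div_div_div_cancel_right₀]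
    exact hz0.ne'
  -- Step D : conclusion
  have hPf : ∀ᶠ γ in l, (0 ≤ Pf (zstar γ) - 1/(zstar γ)^3 ∧ Pf (zstar γ) - 1/(zstar γ)^3 ≤ 2)
      ∧ (0 ≤ Pf (zstar γ + γ) - 1/(zstar γ + γ)^3 ∧ Pf (zstar γ + γ) - 1/(zstar γ + γ)^3 ≤ 2) := by
    filter_upwards [hbase] with γ hb
    obtain ⟨hγ0, -, -, hz0, -⟩ := hb
    have hzγ : 0 < zstar γ + γ := by linarith
    exact ⟨⟨by linarith [Pf_ge_inv_cube _ hz0], by linarith [Pf_le _ hz0]⟩,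
      ⟨by linarith [Pf_ge_inv_cube _ hzγ], by linarith [Pf_le _ hzγ]⟩⟩
  have hA : Tendsto (fun γ => 2*(γ/zstar γ)^3) l (nhds (2*(s-1)^3)) :=
    (hrat.pow 3).const_mul 2
  have hBt : Tendsto (fun γ => 2*c*(γ/(zstar γ + γ))^3) l (nhds (2*c*((s-1)/s)^3)) :=
    (hu.pow 3).const_mul (2*c)
  have hC : Tendsto (fun γ => γ^3*(2*(Pf (zstar γ) - 1/(zstar γ)^3)
      - 2*c*(Pf (zstar γ + γ) - 1/(zstar γ + γ)^3))) l (nhds 0) := by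
    apply squeeze_zero_norm' (a := fun γ => (4+4*c)*γ^3)
    · filter_upwards [hbase, hPf] with γ hb hP
      obtain ⟨hγ0, -, -, hz0, -⟩ := hb
      obtain ⟨⟨hq1, hq2⟩, ⟨hq3, hq4⟩⟩ := hP
      rw [Real.norm_eq_abs, abs_mul, abs_of_nonneg (by positivity : (0:ℝ) ≤ γ^3)]
      have habs : |2*(Pf (zstar γ) - 1/(zstar γ)^3)
          - 2*c*(Pf (zstar γ + γ) - 1/(zstar γ + γ)^3)| ≤ 4+4*c := by
        rw [abs_le]
        constructor
        · nlinarith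
        · nlinarith
      calc γ^3 * |2*(Pf (zstar γ) - 1/(zstar γ)^3)
          - 2*c*(Pf (zstar γ + γ) - 1/(zstar γ + γ)^3)| ≤ γ^3 * (4+4*c) :=
            mul_le_mul_of_nonneg_left habs (by positivity)
        _ = (4+4*c)*γ^3 := by ring
    · have hcont : Tendsto (fun γ : ℝ => (4+4*c)*γ^3) (nhds 0) (nhds ((4+4*c)*0^3)) :=
        ((continuous_const.mul (continuous_pow 3)).tendsto 0)
      have : Tendsto (fun γ : ℝ => (4+4*c)*γ^3) l (nhds ((4+4*c)*0^3)) := by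
        rw [hl_def]
        exact hcont.mono_left nhdsWithin_le_nhds
      simpa using this
  have hfinal := (hA.sub hBt).add hC
  rw [add_zero] at hfinal
  have hvalue : 2*(s-1)^3 - 2*c*((s-1)/s)^3 = 2*(s-1)^4/s := by
    rw [show c = s^2 from hcs.symm]
    field_simp
  rw [hvalue] at hfinal
  refine Tendsto.congr' ?_ hfinal
  filter_upwards [hbase] with γ hb
  obtain ⟨hγ0, -, -, hz0, -⟩ := hb
  have hzγ : 0 < zstar γ + γ := by linarith
  rw [polygammaTwo_eq _ hz0, polygammaTwo_eq _ hzγ]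
  field_simp
  ring
end

section
/- Let c > 1 and 0 < a ≤ b. There exist constants C > 0 and γ₀ > 0 such that for all 0 < γ < γ₀ and all z̃ ∈ [a, b]: | ψ₁(γ z̃) − c·ψ₁(γ(1 + z̃)) − γ^{−2}·(1/z̃² − c/(1 + z̃)²) − (1 − c)·π²/6 | ≤ C·γ. -/
open Real Filter Set

private lemma hne {y : ℝ} (hy : 0 < y) : ∀ m : ℕ, y ≠ -(m : ℝ) := by
  intro m h
  have := Nat.cast_nonneg (α := ℝ) m
  linarith

private lemma analyticAt_rGamma {x : ℝ} (hx : 0 < x) : AnalyticAt ℝ Real.Gamma x := by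
  have hopen : IsOpen {s : ℂ | 0 < s.re} := isOpen_lt continuous_const Complex.continuous_re
  have hC : AnalyticOnNhd ℂ Complex.Gamma {s : ℂ | 0 < s.re} := by
    refine DifferentiableOn.analyticOnNhd (fun s hs => ?_) hopen
    refine (Complex.differentiableAt_Gamma s fun m hm => ?_).differentiableWithinAt
    rw [hm] at hs
    simp only [Set.mem_setOf_eq, Complex.neg_re, Complex.natCast_re] at hs
    have := Nat.cast_nonneg (α := ℝ) m
    linarith
  have h1 : AnalyticAt ℝ Complex.Gamma (x : ℂ) :=
    (hC (x : ℂ) (by simpa using hx)).restrictScalars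
  have h2 : AnalyticAt ℝ (fun t : ℝ => Complex.Gamma (t : ℂ)) x :=
    h1.comp (Complex.ofRealCLM.analyticAt x)
  have h3 : AnalyticAt ℝ (fun t : ℝ => (Complex.Gamma (t : ℂ)).re) x :=
    (Complex.reCLM.analyticAt _).comp h2
  exact h3.congr (Eventually.of_forall fun t => by
    show (Complex.Gamma (t : ℂ)).re = _
    rw [Complex.Gamma_ofReal, Complex.ofReal_re])

private lemma analyticAt_digamma {x : ℝ} (hx : 0 < x) : AnalyticAt ℝ digamma x := by
  have hA : AnalyticOnNhd ℝ Real.Gamma (Ioi (0 : ℝ)) := fun y hy => analyticAt_rGamma hy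
  have h1 : AnalyticAt ℝ (fun y => deriv Real.Gamma y / Real.Gamma y) x :=
    (hA.deriv x hx).div (analyticAt_rGamma hx) (Real.Gamma_ne_zero (hne hx))
  refine h1.congr ?_
  filter_upwards [eventually_gt_nhds hx] with y hy
  exact (deriv.log (Real.differentiableAt_Gamma (hne hy)) (Real.Gamma_ne_zero (hne hy))).symm

private lemma analyticAt_trigamma {x : ℝ} (hx : 0 < x) : AnalyticAt ℝ trigamma x := by
  have hA : AnalyticOnNhd ℝ digamma (Ioi (0 : ℝ)) := fun y hy => analyticAt_digamma hy
  exact hA.deriv x hx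

private lemma hasDerivAt_logGamma {x : ℝ} (hx : 0 < x) :
    HasDerivAt (fun y => Real.log (Real.Gamma y)) (digamma x) x := by
  have : DifferentiableAt ℝ (fun y => Real.log (Real.Gamma y)) x :=
    (Real.differentiableAt_Gamma (hne hx)).log (Real.Gamma_ne_zero (hne hx))
  exact this.hasDerivAt

private lemma hasDerivAt_digamma {x : ℝ} (hx : 0 < x) :
    HasDerivAt digamma (trigamma x) x :=
  (analyticAt_digamma hx).differentiableAt.hasDerivAt

private lemma digamma_add_one {x : ℝ} (hx : 0 < x) :
    digamma (x + 1) = digamma x + 1 / x := by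
  have heq : (fun y : ℝ => Real.log (Real.Gamma (y + 1))) =ᶠ[nhds x]
      (fun y : ℝ => Real.log (Real.Gamma y) + Real.log y) := by
    filter_upwards [eventually_gt_nhds hx] with y hy
    rw [Real.Gamma_add_one hy.ne', Real.log_mul hy.ne' (Real.Gamma_pos_of_pos hy).ne']
    ring
  calc digamma (x + 1) = deriv (fun y : ℝ => Real.log (Real.Gamma (y + 1))) x :=
        (deriv_comp_add_const _ 1 x).symm
    _ = deriv (fun y : ℝ => Real.log (Real.Gamma y) + Real.log y) x := heq.deriv_eq
    _ = digamma x + 1 / x := by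
        rw [deriv_fun_add ((Real.differentiableAt_Gamma (hne hx)).log (Real.Gamma_ne_zero (hne hx)))
          (Real.differentiableAt_log hx.ne'), Real.deriv_log, one_div]
        rfl

private lemma trigamma_add_one {x : ℝ} (hx : 0 < x) :
    trigamma (x + 1) = trigamma x - 1 / x ^ 2 := by
  have heq : (fun y : ℝ => digamma (y + 1)) =ᶠ[nhds x]
      (fun y : ℝ => digamma y + y⁻¹) := by
    filter_upwards [eventually_gt_nhds hx] with y hy
    rw [digamma_add_one hy, one_div]
  calc trigamma (x + 1) = deriv (fun y : ℝ => digamma (y + 1)) x :=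
        (deriv_comp_add_const _ 1 x).symm
    _ = deriv (fun y : ℝ => digamma y + y⁻¹) x := heq.deriv_eq
    _ = trigamma x - 1 / x ^ 2 := by
        rw [deriv_fun_add (analyticAt_digamma hx).differentiableAt (differentiableAt_inv hx.ne'),
          deriv_inv]
        show trigamma x + -(x ^ 2)⁻¹ = _
        ring

private lemma digamma_dup {x : ℝ} (hx : 0 < x) :
    digamma x + digamma (x + 1 / 2) = 2 * digamma (2 * x) - 2 * Real.log 2 := by
  have hx2 : 0 < x + 1 / 2 := by linarith
  have hx3 : 0 < 2 * x := by linarith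
  have heq : (fun y : ℝ => Real.log (Real.Gamma y) + Real.log (Real.Gamma (y + 1 / 2)))
      =ᶠ[nhds x] (fun y : ℝ => Real.log (Real.Gamma (2 * y)) +
        ((1 - 2 * y) * Real.log 2 + Real.log (Real.sqrt Real.pi))) := by
    filter_upwards [eventually_gt_nhds hx] with y hy
    have h := Real.Gamma_mul_Gamma_add_half y
    have h1 : 0 < Real.Gamma y := Real.Gamma_pos_of_pos hy
    have h2 : 0 < Real.Gamma (y + 1 / 2) := Real.Gamma_pos_of_pos (by linarith)
    have h3 : 0 < Real.Gamma (2 * y) := Real.Gamma_pos_of_pos (by linarith)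
    have h4 : (0 : ℝ) < (2 : ℝ) ^ (1 - 2 * y) := Real.rpow_pos_of_pos two_pos _
    have h5 : 0 < Real.sqrt Real.pi := Real.sqrt_pos.mpr Real.pi_pos
    have h6 := congrArg Real.log h
    rw [Real.log_mul h1.ne' h2.ne', Real.log_mul (mul_pos h3 h4).ne' h5.ne',
      Real.log_mul h3.ne' h4.ne', Real.log_rpow two_pos] at h6
    linarith
  have hL : HasDerivAt (fun y : ℝ => Real.log (Real.Gamma y) + Real.log (Real.Gamma (y + 1 / 2)))
      (digamma x + digamma (x + 1 / 2)) x :=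
    (hasDerivAt_logGamma hx).add ((hasDerivAt_logGamma hx2).comp_add_const x (1 / 2))
  have hmul : HasDerivAt (fun y : ℝ => 2 * y) 2 x := by
    simpa using (hasDerivAt_id x).const_mul (2 : ℝ)
  have h1 : HasDerivAt (fun y : ℝ => Real.log (Real.Gamma (2 * y))) (digamma (2 * x) * 2) x := by
    exact (hasDerivAt_logGamma hx3).comp x hmul
  have h2 : HasDerivAt (fun y : ℝ => (1 - 2 * y) * Real.log 2 + Real.log (Real.sqrt Real.pi))
      (-2 * Real.log 2) x := by
    have hlin : HasDerivAt (fun y : ℝ => 1 - 2 * y) (-2) x := by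
      simpa using hmul.const_sub 1
    simpa using (hlin.mul_const (Real.log 2)).add_const (Real.log (Real.sqrt Real.pi))
  have hR : HasDerivAt (fun y : ℝ => Real.log (Real.Gamma (2 * y)) +
      ((1 - 2 * y) * Real.log 2 + Real.log (Real.sqrt Real.pi)))
      (digamma (2 * x) * 2 + -2 * Real.log 2) x := h1.add h2
  have := heq.deriv_eq
  rw [hL.deriv, hR.deriv] at this
  linarith

private lemma trigamma_dup {x : ℝ} (hx : 0 < x) :
    trigamma x + trigamma (x + 1 / 2) = 4 * trigamma (2 * x) := by
  have hx2 : 0 < x + 1 / 2 := by linarith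
  have hx3 : 0 < 2 * x := by linarith
  have heq : (fun y : ℝ => digamma y + digamma (y + 1 / 2)) =ᶠ[nhds x]
      (fun y : ℝ => 2 * digamma (2 * y) - 2 * Real.log 2) := by
    filter_upwards [eventually_gt_nhds hx] with y hy
    exact digamma_dup hy
  have hL : HasDerivAt (fun y : ℝ => digamma y + digamma (y + 1 / 2))
      (trigamma x + trigamma (x + 1 / 2)) x :=
    (hasDerivAt_digamma hx).add ((hasDerivAt_digamma hx2).comp_add_const x (1 / 2))
  have hmul : HasDerivAt (fun y : ℝ => 2 * y) 2 x := by
    simpa using (hasDerivAt_id x).const_mul (2 : ℝ)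
  have h1 : HasDerivAt (fun y : ℝ => digamma (2 * y)) (trigamma (2 * x) * 2) x :=
    (hasDerivAt_digamma hx3).comp x hmul
  have hR : HasDerivAt (fun y : ℝ => 2 * digamma (2 * y) - 2 * Real.log 2)
      (2 * (trigamma (2 * x) * 2)) x := (h1.const_mul 2).sub_const _
  have := heq.deriv_eq
  rw [hL.deriv, hR.deriv] at this
  linarith

private lemma digamma_refl {x : ℝ} (hx : 0 < x) (hx1 : x < 1) :
    digamma x - digamma (1 - x) = -(Real.pi * Real.cos (Real.pi * x)) / Real.sin (Real.pi * x) := by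
  have hx2 : 0 < 1 - x := by linarith
  have heq : (fun y : ℝ => Real.log (Real.Gamma y) + Real.log (Real.Gamma (1 - y)))
      =ᶠ[nhds x] (fun y : ℝ => Real.log Real.pi - Real.log (Real.sin (Real.pi * y))) := by
    filter_upwards [Ioo_mem_nhds hx hx1] with y hy
    obtain ⟨hy0, hy1⟩ := hy
    have hs : 0 < Real.sin (Real.pi * y) :=
      Real.sin_pos_of_pos_of_lt_pi (by positivity) (by nlinarith [Real.pi_pos])
    have h1 : 0 < Real.Gamma y := Real.Gamma_pos_of_pos hy0
    have h2 : 0 < Real.Gamma (1 - y) := Real.Gamma_pos_of_pos (by linarith)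
    have h6 := congrArg Real.log (Real.Gamma_mul_Gamma_one_sub y)
    rw [Real.log_mul h1.ne' h2.ne', Real.log_div Real.pi_pos.ne' hs.ne'] at h6
    exact h6
  have hsx : 0 < Real.sin (Real.pi * x) :=
    Real.sin_pos_of_pos_of_lt_pi (by positivity) (by nlinarith [Real.pi_pos])
  have hlin : HasDerivAt (fun y : ℝ => 1 - y) (-1) x := by
    simpa using (hasDerivAt_id x).const_sub 1
  have hL : HasDerivAt (fun y : ℝ => Real.log (Real.Gamma y) + Real.log (Real.Gamma (1 - y)))
      (digamma x - digamma (1 - x)) x := by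
    have h2 : HasDerivAt (fun y : ℝ => Real.log (Real.Gamma (1 - y)))
        (digamma (1 - x) * (-1)) x := (hasDerivAt_logGamma hx2).comp x hlin
    have := (hasDerivAt_logGamma hx).fun_add h2
    refine this.congr_deriv ?_
    ring
  have hsin : HasDerivAt (fun y : ℝ => Real.sin (Real.pi * y))
      (Real.cos (Real.pi * x) * Real.pi) x := by
    have hm : HasDerivAt (fun y : ℝ => Real.pi * y) Real.pi x := by
      simpa using (hasDerivAt_id x).const_mul Real.pi
    exact (Real.hasDerivAt_sin (Real.pi * x)).comp x hm
  have hR : HasDerivAt (fun y : ℝ => Real.log Real.pi - Real.log (Real.sin (Real.pi * y)))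
      (-(Real.pi * Real.cos (Real.pi * x)) / Real.sin (Real.pi * x)) x := by
    have hlog := (hsin.log hsx.ne')
    have := hlog.const_sub (Real.log Real.pi)
    refine this.congr_deriv ?_
    ring
  have := heq.deriv_eq
  rw [hL.deriv, hR.deriv] at this
  exact this

private lemma trigamma_half : trigamma (1 / 2) = Real.pi ^ 2 / 2 := by
  have hmem : (1 / 2 : ℝ) ∈ Ioo (0 : ℝ) 1 := by norm_num
  have heq : (fun y : ℝ => digamma y - digamma (1 - y)) =ᶠ[nhds (1 / 2 : ℝ)]
      (fun y : ℝ => -(Real.pi * Real.cos (Real.pi * y)) / Real.sin (Real.pi * y)) := by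
    filter_upwards [Ioo_mem_nhds hmem.1 hmem.2] with y hy
    exact digamma_refl hy.1 hy.2
  have h12 : (0 : ℝ) < 1 / 2 := by norm_num
  have hlin : HasDerivAt (fun y : ℝ => 1 - y) (-1) (1 / 2 : ℝ) := by
    simpa using (hasDerivAt_id (1 / 2 : ℝ)).const_sub 1
  have hL : HasDerivAt (fun y : ℝ => digamma y - digamma (1 - y))
      (trigamma (1 / 2) + trigamma (1 / 2)) (1 / 2 : ℝ) := by
    have h2 : HasDerivAt (fun y : ℝ => digamma (1 - y))
        (trigamma (1 - 1 / 2) * (-1)) (1 / 2 : ℝ) :=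
      (hasDerivAt_digamma (by norm_num : (0:ℝ) < 1 - 1/2)).comp (1 / 2 : ℝ) hlin
    have := (hasDerivAt_digamma h12).fun_sub h2
    refine this.congr_deriv ?_
    norm_num
  have hpi2 : Real.pi * (1 / 2 : ℝ) = Real.pi / 2 := by ring
  have hs : Real.sin (Real.pi * (1 / 2 : ℝ)) = 1 := by rw [hpi2, Real.sin_pi_div_two]
  have hcz : Real.cos (Real.pi * (1 / 2 : ℝ)) = 0 := by rw [hpi2, Real.cos_pi_div_two]
  have hm : HasDerivAt (fun y : ℝ => Real.pi * y) Real.pi (1 / 2 : ℝ) := by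
    simpa using (hasDerivAt_id (1 / 2 : ℝ)).const_mul Real.pi
  have hcos : HasDerivAt (fun y : ℝ => Real.cos (Real.pi * y))
      (-Real.sin (Real.pi * (1 / 2 : ℝ)) * Real.pi) (1 / 2 : ℝ) :=
    (Real.hasDerivAt_cos (Real.pi * (1 / 2 : ℝ))).comp (1 / 2 : ℝ) hm
  have hnum : HasDerivAt (fun y : ℝ => -(Real.pi * Real.cos (Real.pi * y)))
      (-(Real.pi * (-Real.sin (Real.pi * (1 / 2 : ℝ)) * Real.pi))) (1 / 2 : ℝ) :=
    ((hcos.const_mul Real.pi)).neg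
  have hden : HasDerivAt (fun y : ℝ => Real.sin (Real.pi * y))
      (Real.cos (Real.pi * (1 / 2 : ℝ)) * Real.pi) (1 / 2 : ℝ) :=
    (Real.hasDerivAt_sin (Real.pi * (1 / 2 : ℝ))).comp (1 / 2 : ℝ) hm
  have hR : HasDerivAt (fun y : ℝ => -(Real.pi * Real.cos (Real.pi * y)) / Real.sin (Real.pi * y))
      (Real.pi ^ 2) (1 / 2 : ℝ) := by
    have := hnum.fun_div hden (by rw [hs]; norm_num)
    refine this.congr_deriv ?_
    rw [hs, hcz]
    ring
  have := heq.deriv_eq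
  rw [hL.deriv, hR.deriv] at this
  linarith

private lemma trigamma_one : trigamma 1 = Real.pi ^ 2 / 6 := by
  have h := trigamma_dup (show (0:ℝ) < 1/2 by norm_num)
  rw [show (1/2 : ℝ) + 1/2 = 1 by norm_num, show (2 : ℝ) * (1/2) = 1 by norm_num,
    trigamma_half] at h
  linarith

/-- Small-`γ` expansion of `ψ₁(γz̃) - c·ψ₁(γ(1 + z̃))`, uniformly for `z̃` in a compact
interval `[a, b] ⊆ (0, ∞)`:
`ψ₁(γz̃) - c·ψ₁(γ(1+z̃)) = γ⁻²(1/z̃² - c/(1+z̃)²) + (1-c)π²/6 + O(γ)`. -/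
theorem trigamma_small_gamma_expansion (c a b : ℝ) (hc : 1 < c) (ha : 0 < a) (hab : a ≤ b) :
    ∃ C > (0 : ℝ), ∃ γ₀ > (0 : ℝ), ∀ γ : ℝ, 0 < γ → γ < γ₀ →
      ∀ z ∈ Set.Icc a b,
        |trigamma (γ * z) - c * trigamma (γ * (1 + z))
            - (1 / γ ^ 2) * (1 / z ^ 2 - c / (1 + z) ^ 2)
            - (1 - c) * Real.pi ^ 2 / 6| ≤ C * γ := by
  obtain ⟨K, t, ht, hlip⟩ :=
    (((analyticAt_trigamma one_pos).contDiffAt (n := 1)) :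
      ContDiffAt ℝ 1 trigamma 1).exists_lipschitzOnWith
  obtain ⟨δ, hδ, hball⟩ := Metric.mem_nhds_iff.mp ht
  have hb : 0 < 1 + b := by linarith
  have hK : (0:ℝ) ≤ (K : ℝ) := K.coe_nonneg
  refine ⟨((K : ℝ) + 1) * (1 + c) * (1 + b), by positivity, δ / (1 + b), by positivity, ?_⟩
  intro γ hγ hγ0 z hz
  obtain ⟨hza, hzb⟩ := hz
  have hz0 : 0 < z := lt_of_lt_of_le ha hza
  have h1 : 0 < γ * z := mul_pos hγ hz0
  have h2 : 0 < γ * (1 + z) := by positivity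
  have hsm1 : γ * z < δ := by
    have : γ * z ≤ γ * (1 + b) := by nlinarith
    have h' : γ * (1 + b) < δ := by
      calc γ * (1 + b) < (δ / (1 + b)) * (1 + b) := by
            apply mul_lt_mul_of_pos_right hγ0 hb
        _ = δ := by field_simp
    linarith
  have hsm2 : γ * (1 + z) < δ := by
    have : γ * (1 + z) ≤ γ * (1 + b) := by nlinarith
    have h' : γ * (1 + b) < δ := by
      calc γ * (1 + b) < (δ / (1 + b)) * (1 + b) := by
            apply mul_lt_mul_of_pos_right hγ0 hb
        _ = δ := by field_simp
    linarith
  have hm1 : γ * z + 1 ∈ t := by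
    apply hball
    simp only [Metric.mem_ball, Real.dist_eq]
    rw [show γ * z + 1 - 1 = γ * z by ring, abs_of_pos h1]
    exact hsm1
  have hm2 : γ * (1 + z) + 1 ∈ t := by
    apply hball
    simp only [Metric.mem_ball, Real.dist_eq]
    rw [show γ * (1 + z) + 1 - 1 = γ * (1 + z) by ring, abs_of_pos h2]
    exact hsm2
  have hmc : (1 : ℝ) ∈ t := hball (Metric.mem_ball_self hδ)
  have lip1 : |trigamma (γ * z + 1) - Real.pi ^ 2 / 6| ≤ (K : ℝ) * (γ * z) := by
    have := hlip.dist_le_mul _ hm1 _ hmc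
    rw [Real.dist_eq, Real.dist_eq, trigamma_one,
      show γ * z + 1 - 1 = γ * z by ring, abs_of_pos h1] at this
    exact this
  have lip2 : |trigamma (γ * (1 + z) + 1) - Real.pi ^ 2 / 6| ≤ (K : ℝ) * (γ * (1 + z)) := by
    have := hlip.dist_le_mul _ hm2 _ hmc
    rw [Real.dist_eq, Real.dist_eq, trigamma_one,
      show γ * (1 + z) + 1 - 1 = γ * (1 + z) by ring, abs_of_pos h2] at this
    exact this
  have e1 : trigamma (γ * z) = 1 / (γ * z) ^ 2 + trigamma (γ * z + 1) := by
    have := trigamma_add_one h1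
    linarith
  have e2 : trigamma (γ * (1 + z)) = 1 / (γ * (1 + z)) ^ 2 + trigamma (γ * (1 + z) + 1) := by
    have := trigamma_add_one h2
    linarith
  set A := trigamma (γ * z + 1) with hA
  set B := trigamma (γ * (1 + z) + 1) with hB
  have key : trigamma (γ * z) - c * trigamma (γ * (1 + z))
      - (1 / γ ^ 2) * (1 / z ^ 2 - c / (1 + z) ^ 2)
      - (1 - c) * Real.pi ^ 2 / 6
      = (A - Real.pi ^ 2 / 6) - c * (B - Real.pi ^ 2 / 6) := by
    rw [e1, e2]
    have hγ' : γ ≠ 0 := hγ.ne'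
    have hz' : z ≠ 0 := hz0.ne'
    have hz1 : (1 + z) ≠ 0 := by positivity
    field_simp
    ring
  rw [key]
  have htri : |(A - Real.pi ^ 2 / 6) - c * (B - Real.pi ^ 2 / 6)|
      ≤ |A - Real.pi ^ 2 / 6| + c * |B - Real.pi ^ 2 / 6| := by
    have h := abs_add_le (A - Real.pi ^ 2 / 6) (-(c * (B - Real.pi ^ 2 / 6)))
    rw [abs_neg, abs_mul, abs_of_pos (by linarith : (0:ℝ) < c)] at h
    simpa [sub_eq_add_neg] using h
  have hc0 : (0:ℝ) < c := by linarith
  calc |(A - Real.pi ^ 2 / 6) - c * (B - Real.pi ^ 2 / 6)|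
      ≤ |A - Real.pi ^ 2 / 6| + c * |B - Real.pi ^ 2 / 6| := htri
    _ ≤ (K : ℝ) * (γ * z) + c * ((K : ℝ) * (γ * (1 + z))) := by
        have := mul_le_mul_of_nonneg_left lip2 hc0.le
        linarith
    _ ≤ ((K : ℝ) + 1) * (1 + c) * (1 + b) * γ := by
        have hb0 : (0:ℝ) < b := lt_of_lt_of_le ha hab
        nlinarith [mul_le_mul_of_nonneg_left hzb (mul_nonneg hK hγ.le),
          mul_le_mul_of_nonneg_left hzb (mul_nonneg (mul_nonneg hc0.le hK) hγ.le),
          mul_nonneg hK hγ.le, mul_nonneg (mul_nonneg hK hγ.le) hb0.le,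
          mul_pos hγ hb0, mul_nonneg (mul_nonneg hc0.le hγ.le) hb0.le,
          mul_nonneg (mul_nonneg hc0.le hK) hγ.le,
          mul_nonneg (mul_nonneg (mul_nonneg hc0.le hK) hγ.le) hb0.le]
end

section
/- For each γ > 0 let Gamma(γ) denote the Gamma distribution on (0,∞) with shape γ and rate 1. Then for every t ∈ ℝ, lim_{γ → 0+} Gamma(γ)({x > 0 : −γ·log x ≤ t}) equals 1 − e^{−t} if t ≥ 0 and equals 0 if t < 0. In other words, if G_γ is Gamma(γ)-distributed then −γ·log G_γ converges in distribution, as γ → 0+, to a standard exponential random variable. -/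
open Filter ProbabilityTheory MeasureTheory Real Set

lemma gamma_Ici_bounds {γ b : ℝ} (hγ : 0 < γ) (hγ1 : γ < 1) (hb : 0 < b) (hb1 : b ≤ 1) :
    1 - b ^ γ / Real.Gamma (γ + 1) ≤ (gammaMeasure γ 1 (Set.Ici b)).toReal ∧
    (gammaMeasure γ 1 (Set.Ici b)).toReal
      ≤ 1 - b ^ γ / Real.Gamma (γ + 1) + γ / ((γ + 1) * Real.Gamma (γ + 1)) := by
  have hΓ : 0 < Real.Gamma γ := Real.Gamma_pos_of_pos hγ
  have hΓ1 : 0 < Real.Gamma (γ + 1) := Real.Gamma_pos_of_pos (by linarith)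
  have hΓadd : Real.Gamma (γ + 1) = γ * Real.Gamma γ := Real.Gamma_add_one hγ.ne'
  haveI : IsProbabilityMeasure (gammaMeasure γ 1) := isProbabilityMeasure_gammaMeasure hγ one_pos
  -- integrability facts
  have hint1 : IntegrableOn (fun x : ℝ => x ^ (γ - 1)) (Set.Ioc 0 b) := by
    rw [← intervalIntegrable_iff_integrableOn_Ioc_of_le hb.le]
    exact intervalIntegral.intervalIntegrable_rpow' (by linarith)
  have hint2 : IntegrableOn (fun x : ℝ => x ^ γ) (Set.Ioc 0 b) := by
    rw [← intervalIntegrable_iff_integrableOn_Ioc_of_le hb.le]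
    exact intervalIntegral.intervalIntegrable_rpow' (by linarith)
  have hmeas : Measurable (fun x : ℝ => x ^ (γ - 1) * Real.exp (-x)) :=
    (measurable_id.pow_const _).mul (measurable_id.neg.exp)
  have hintf : IntegrableOn (fun x : ℝ => x ^ (γ - 1) * Real.exp (-x)) (Set.Ioc 0 b) := by
    refine hint1.mono' hmeas.aestronglyMeasurable.restrict ?_
    filter_upwards [ae_restrict_mem measurableSet_Ioc] with x hx
    rw [Real.norm_eq_abs, abs_mul, abs_of_nonneg (Real.rpow_nonneg hx.1.le _),
      abs_of_nonneg (Real.exp_nonneg _)]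
    exact mul_le_of_le_one_right (Real.rpow_nonneg hx.1.le _)
      (Real.exp_le_one_iff.2 (by linarith [hx.1.le]))
  -- value of the two rpow integrals
  have hI1 : ∫ x in Set.Ioc 0 b, x ^ (γ - 1) = b ^ γ / γ := by
    rw [← intervalIntegral.integral_of_le hb.le, integral_rpow (Or.inl (by linarith))]
    rw [Real.zero_rpow (by linarith), sub_zero]
    ring_nf
  have hI2 : ∫ x in Set.Ioc 0 b, x ^ γ = b ^ (γ + 1) / (γ + 1) := by
    rw [← intervalIntegral.integral_of_le hb.le, integral_rpow (Or.inl (by linarith))]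
    rw [Real.zero_rpow (by linarith), sub_zero]
  -- the integral J
  set J : ℝ := ∫ x in Set.Ioc 0 b, x ^ (γ - 1) * Real.exp (-x) with hJdef
  have hJub : J ≤ b ^ γ / γ := by
    rw [← hI1]
    refine setIntegral_mono_on hintf hint1 measurableSet_Ioc fun x hx => ?_
    exact mul_le_of_le_one_right (Real.rpow_nonneg hx.1.le _)
      (Real.exp_le_one_iff.2 (by linarith [hx.1.le]))
  have hJlb : b ^ γ / γ - b ^ (γ + 1) / (γ + 1) ≤ J := by
    have : ∫ x in Set.Ioc 0 b, (x ^ (γ - 1) - x ^ γ) = b ^ γ / γ - b ^ (γ + 1) / (γ + 1) := by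
      rw [integral_sub hint1 hint2, hI1, hI2]
    rw [← this]
    refine setIntegral_mono_on (hint1.sub hint2) hintf measurableSet_Ioc fun x hx => ?_
    have hxpow : x ^ γ = x ^ (γ - 1) * x := by
      rw [← Real.rpow_add_one hx.1.ne' (γ - 1)]; ring_nf
    have h1x : 1 - x ≤ Real.exp (-x) := by linarith [Real.add_one_le_exp (-x)]
    have := mul_le_mul_of_nonneg_left h1x (Real.rpow_nonneg hx.1.le (γ - 1))
    calc x ^ (γ - 1) - x ^ γ = x ^ (γ - 1) * (1 - x) := by rw [hxpow]; ring
    _ ≤ x ^ (γ - 1) * Real.exp (-x) := this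
  -- measure of Iio b equals J / Γ γ
  have hIio : (gammaMeasure γ 1 (Set.Iio b)).toReal = J / Real.Gamma γ := by
    have h0 : (gammaMeasure γ 1 (Set.Iio b)).toReal
        = ∫ x in Set.Iic b, gammaPDFReal γ 1 x := by
      rw [← cdf_gammaMeasure_eq_integral hγ one_pos, cdf_eq_real, measureReal_def]
      congr 1
      have hs : gammaMeasure γ 1 {b} = 0 := by
        rw [gammaMeasure, withDensity_apply _ (measurableSet_singleton b),
          Measure.restrict_eq_zero.mpr (by simp), lintegral_zero_measure]
      have h2 : Set.Iic b = Set.Iio b ∪ {b} := (Set.Iio_union_right).symm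
      rw [h2]
      exact le_antisymm (measure_mono Set.subset_union_left)
        ((measure_union_le _ _).trans (by rw [hs, add_zero]))
    rw [h0]
    have hsplit : Set.Iic b = Set.Iic 0 ∪ Set.Ioc 0 b := (Set.Iic_union_Ioc_eq_Iic hb.le).symm
    have hd : Disjoint (Set.Iic 0) (Set.Ioc 0 b) := Set.Iic_disjoint_Ioc le_rfl
    have hf_eq : Set.EqOn (fun x => (1 / Real.Gamma γ) * (x ^ (γ - 1) * Real.exp (-x)))
        (gammaPDFReal γ 1) (Set.Ioc 0 b) := by
      intro x hx
      simp only [gammaPDFReal, if_pos hx.1.le, Real.one_rpow, one_mul]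
      ring
    have hzero : Set.EqOn (gammaPDFReal γ 1) (fun _ => (0:ℝ)) (Set.Iic 0) := by
      intro x hx
      rcases lt_or_eq_of_le (Set.mem_Iic.mp hx) with h | h
      · simp [gammaPDFReal, if_neg (not_le.mpr h)]
      · subst h
        simp [gammaPDFReal, Real.zero_rpow (show γ - 1 ≠ 0 by linarith)]
    have hIOnLeft : IntegrableOn (gammaPDFReal γ 1) (Set.Iic 0) :=
      IntegrableOn.congr_fun
        (integrableOn_zero : IntegrableOn (fun _ : ℝ => (0:ℝ)) (Set.Iic 0) volume)
        (fun x hx => (hzero hx).symm) measurableSet_Iic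
    have hIOnRight : IntegrableOn (gammaPDFReal γ 1) (Set.Ioc 0 b) :=
      IntegrableOn.congr_fun (hintf.const_mul (1 / Real.Gamma γ)) hf_eq measurableSet_Ioc
    rw [hsplit, setIntegral_union hd measurableSet_Ioc hIOnLeft hIOnRight,
      setIntegral_congr_fun measurableSet_Iic hzero, integral_zero, zero_add,
      ← setIntegral_congr_fun measurableSet_Ioc hf_eq, integral_const_mul, ← hJdef]
    rw [one_div, inv_mul_eq_div]
  -- measure of Ici b
  have hsum : (gammaMeasure γ 1 (Set.Iio b)).toReal + (gammaMeasure γ 1 (Set.Ici b)).toReal = 1 := by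
    have h := measure_add_measure_compl (μ := gammaMeasure γ 1) (measurableSet_Iio (a := b))
    rw [compl_Iio, measure_univ] at h
    have := congrArg ENNReal.toReal h
    rwa [ENNReal.toReal_add (measure_ne_top _ _) (measure_ne_top _ _), ENNReal.toReal_one] at this
  have hIci : (gammaMeasure γ 1 (Set.Ici b)).toReal = 1 - J / Real.Gamma γ := by
    rw [← hIio]; linarith
  rw [hIci, hΓadd]
  set c := Real.Gamma γ
  have hb1' : b ^ (γ + 1) ≤ 1 := Real.rpow_le_one hb.le hb1 (by linarith)
  constructor
  · have h1 : J / c ≤ (b ^ γ / γ) / c := by gcongr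
    rw [div_div] at h1
    linarith
  · have h2 : (b ^ γ / γ - b ^ (γ + 1) / (γ + 1)) / c ≤ J / c := by gcongr
    rw [sub_div, div_div, div_div] at h2
    have h3 : b ^ (γ + 1) / ((γ + 1) * c) ≤ 1 / ((γ + 1) * c) := by gcongr
    have h4 : 1 / ((γ + 1) * c) = γ / ((γ + 1) * (γ * c)) := by
      field_simp
    linarith


/-- If `G_γ` is Gamma(γ)-distributed (shape `γ`, rate `1`), then `-γ·log G_γ` converges in
distribution, as `γ → 0+`, to a standard exponential random variable: for every `t ∈ ℝ`,
`Gamma(γ)({x > 0 : -γ log x ≤ t}) → 1 - e^{-t}` if `t ≥ 0` and `→ 0` if `t < 0`. -/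
theorem neg_gamma_log_gammaMeasure_tendsto_exponential (t : ℝ) :
    Tendsto
      (fun γ : ℝ =>
        (gammaMeasure γ 1 {x : ℝ | 0 < x ∧ -(γ * Real.log x) ≤ t}).toReal)
      (nhdsWithin 0 (Set.Ioi 0))
      (nhds (if 0 ≤ t then 1 - Real.exp (-t) else 0)) := by
  -- the set is Ici (exp (-t/γ)) for γ > 0
  have hset : ∀ γ : ℝ, 0 < γ →
      {x : ℝ | 0 < x ∧ -(γ * Real.log x) ≤ t} = Set.Ici (Real.exp (-t / γ)) := by
    intro γ hγ
    ext x
    simp only [Set.mem_setOf_eq, Set.mem_Ici]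
    constructor
    · rintro ⟨hx, hle⟩
      have h1 : -t / γ ≤ Real.log x := by
        rw [div_le_iff₀ hγ]
        nlinarith
      calc Real.exp (-t / γ) ≤ Real.exp (Real.log x) := Real.exp_le_exp.mpr h1
      _ = x := Real.exp_log hx
    · intro h
      have hx : 0 < x := lt_of_lt_of_le (Real.exp_pos _) h
      refine ⟨hx, ?_⟩
      have h1 : -t / γ ≤ Real.log x := (Real.le_log_iff_exp_le hx).mpr h
      rw [div_le_iff₀ hγ] at h1
      nlinarith
  -- Gamma (γ+1) → 1
  have hΓtend : Tendsto (fun γ : ℝ => Real.Gamma (γ + 1)) (nhdsWithin 0 (Set.Ioi 0))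
      (nhds 1) := by
    have hcont : ContinuousAt Real.Gamma 1 := by
      refine (Real.differentiableAt_Gamma fun m => ?_).continuousAt
      intro h
      have : (0:ℝ) ≤ m := m.cast_nonneg
      rw [← neg_neg (m : ℝ), ← h] at this
      linarith
    have h1 : Tendsto (fun γ : ℝ => γ + 1) (nhdsWithin 0 (Set.Ioi 0)) (nhds 1) := by
      have := ((continuous_id.add (continuous_const (y := (1:ℝ)))).tendsto (0:ℝ)).mono_left
        (nhdsWithin_le_nhds (s := Set.Ioi 0))
      convert this using 2 <;> simp
    convert hcont.tendsto.comp h1 using 2 <;> simp [Real.Gamma_one]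
  have hid : Tendsto (fun γ : ℝ => γ) (nhdsWithin 0 (Set.Ioi 0)) (nhds 0) :=
    tendsto_id.mono_left nhdsWithin_le_nhds
  have hmem : Set.Ioo (0:ℝ) 1 ∈ nhdsWithin (0:ℝ) (Set.Ioi 0) :=
    Ioo_mem_nhdsGT one_pos
  -- the error term tends to 0
  have herr : Tendsto (fun γ : ℝ => γ / ((γ + 1) * Real.Gamma (γ + 1)))
      (nhdsWithin 0 (Set.Ioi 0)) (nhds 0) := by
    have hden : Tendsto (fun γ : ℝ => (γ + 1) * Real.Gamma (γ + 1))
        (nhdsWithin 0 (Set.Ioi 0)) (nhds 1) := by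
      have := ((hid.add (tendsto_const_nhds (x := (1:ℝ)))).mul hΓtend)
      simpa using this
    convert hid.div hden one_ne_zero using 2 <;> simp
  by_cases ht : 0 ≤ t
  · rw [if_pos ht]
    have hlow : Tendsto (fun γ : ℝ => 1 - Real.exp (-t) / Real.Gamma (γ + 1))
        (nhdsWithin 0 (Set.Ioi 0)) (nhds (1 - Real.exp (-t))) := by
      have := (tendsto_const_nhds (x := (1:ℝ))).sub
        ((tendsto_const_nhds (x := Real.exp (-t))).div hΓtend one_ne_zero)
      simpa using this
    have hup : Tendsto (fun γ : ℝ =>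
        1 - Real.exp (-t) / Real.Gamma (γ + 1) + γ / ((γ + 1) * Real.Gamma (γ + 1)))
        (nhdsWithin 0 (Set.Ioi 0)) (nhds (1 - Real.exp (-t))) := by
      simpa using hlow.add herr
    refine tendsto_of_tendsto_of_tendsto_of_le_of_le' hlow hup ?_ ?_
    all_goals
      filter_upwards [hmem] with γ hγ
      have hγ0 : 0 < γ := hγ.1
      have hb : 0 < Real.exp (-t / γ) := Real.exp_pos _
      have hb1 : Real.exp (-t / γ) ≤ 1 := by
        rw [Real.exp_le_one_iff]
        exact div_nonpos_of_nonpos_of_nonneg (by linarith) hγ0.le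
      have hbγ : Real.exp (-t / γ) ^ γ = Real.exp (-t) := by
        rw [Real.rpow_def_of_pos hb, Real.log_exp, div_mul_cancel₀ _ hγ0.ne']
      have hkey := gamma_Ici_bounds hγ0 hγ.2 hb hb1
      rw [hbγ] at hkey
      rw [hset γ hγ0]
      first
        | exact hkey.1
        | exact hkey.2
  · rw [if_neg ht]
    push_neg at ht
    have hup : Tendsto (fun γ : ℝ =>
        1 - 1 / Real.Gamma (γ + 1) + γ / ((γ + 1) * Real.Gamma (γ + 1)))
        (nhdsWithin 0 (Set.Ioi 0)) (nhds 0) := by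
      have h1 : Tendsto (fun γ : ℝ => 1 - 1 / Real.Gamma (γ + 1))
          (nhdsWithin 0 (Set.Ioi 0)) (nhds 0) := by
        have := (tendsto_const_nhds (x := (1:ℝ))).sub
          ((tendsto_const_nhds (x := (1:ℝ))).div hΓtend one_ne_zero)
        simpa using this
      simpa using h1.add herr
    refine tendsto_of_tendsto_of_tendsto_of_le_of_le'
      (tendsto_const_nhds (x := (0:ℝ))) hup
      (Eventually.of_forall fun γ => ENNReal.toReal_nonneg) ?_
    filter_upwards [hmem] with γ hγ
    have hγ0 : 0 < γ := hγ.1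
    haveI : IsProbabilityMeasure (gammaMeasure γ 1) := isProbabilityMeasure_gammaMeasure hγ0 one_pos
    have ha1 : (1:ℝ) ≤ Real.exp (-t / γ) := by
      rw [Real.one_le_exp_iff]
      exact div_nonneg (by linarith) hγ0.le
    have hmono : (gammaMeasure γ 1 (Set.Ici (Real.exp (-t / γ)))).toReal
        ≤ (gammaMeasure γ 1 (Set.Ici 1)).toReal :=
      ENNReal.toReal_mono (measure_ne_top _ _) (measure_mono (Set.Ici_subset_Ici.mpr ha1))
    have hkey := (gamma_Ici_bounds hγ0 hγ.2 one_pos le_rfl).2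
    rw [Real.one_rpow] at hkey
    rw [hset γ hγ0]
    linarith
end
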